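/- If S ⊊ ℤ² is BI-stable, then S contains at most 2 points from every minimal triangle. Consequently, every subset of a BI-stable proper subset of ℤ² is BI-stable. -/

import Mathlib

/-- Embed a lattice point into the plane. -/
def toR (p : ℤ × ℤ) : ℝ × ℝ := ((p.1 : ℝ), (p.2 : ℝ))

/-- Determinant of the 2×2 matrix with columns `u`, `v`. -/
def det2 (u v : ℤ × ℤ) : ℤ := u.1 * v.2 - u.2 * v.1

/-- The set of lattice points in the (closed) triangle with vertices `a b c`. -/
def triPts (a b c : ℤ × ℤ) : Set (ℤ × ℤ) :=
  {p | toR p ∈ convexHull ℝ {toR a, toR b, toR c}}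

/-- A border triangle: a lattice triangle with exactly 4 lattice points, whose
fourth point lies on the boundary (not in the interior). -/
def IsBorderTri (T : Set (ℤ × ℤ)) : Prop :=
  ∃ a b c d : ℤ × ℤ, det2 (b - a) (c - a) ≠ 0 ∧
    T = triPts a b c ∧ T = {a, b, c, d} ∧ T.ncard = 4 ∧
    toR d ∉ interior (convexHull ℝ {toR a, toR b, toR c})

/-- An internal triangle: a lattice triangle with exactly 4 lattice points, whose
fourth point lies in the interior. -/
def IsInternalTri (T : Set (ℤ × ℤ)) : Prop :=
  ∃ a b c d : ℤ × ℤ, det2 (b - a) (c - a) ≠ 0 ∧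
    T = triPts a b c ∧ T = {a, b, c, d} ∧ T.ncard = 4 ∧
    toR d ∈ interior (convexHull ℝ {toR a, toR b, toR c})

/-- `S` is B-stable: no border triangle has exactly three of its points in `S`. -/
def BStable (S : Set (ℤ × ℤ)) : Prop :=
  ∀ T, IsBorderTri T → (T ∩ S).ncard ≠ 3

/-- `S` is I-stable: no internal triangle has exactly three of its points in `S`. -/
def IStable (S : Set (ℤ × ℤ)) : Prop :=
  ∀ T, IsInternalTri T → (T ∩ S).ncard ≠ 3

/-- Upper density of a subset of `ℤ²`. -/
noncomputable def upperDensity (S : Set (ℤ × ℤ)) : ℝ :=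
  Filter.limsup (fun n : ℕ =>
    ((S ∩ Set.Icc (-(n : ℤ), -(n : ℤ)) ((n : ℤ), (n : ℤ))).ncard : ℝ) /
      (2 * (n : ℝ) + 1) ^ 2) Filter.atTop

def IsMinimalTri (T : Set (ℤ × ℤ)) : Prop := IsBorderTri T ∨ IsInternalTri T

def BIStable (S : Set (ℤ × ℤ)) : Prop := BStable S ∧ IStable S


open Set

section Helpers

lemma mem_hull3 {x y z v : ℝ × ℝ} :
    v ∈ convexHull ℝ ({x, y, z} : Set (ℝ × ℝ)) ↔
    ∃ w1 w2 w3 : ℝ, 0 ≤ w1 ∧ 0 ≤ w2 ∧ 0 ≤ w3 ∧ w1 + w2 + w3 = 1 ∧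
      w1 • x + w2 • y + w3 • z = v := by
  rw [convexHull_insert ⟨y, by simp⟩, convexHull_pair, mem_convexJoin]
  constructor
  · rintro ⟨x', hx', w, ⟨p, q, hp, hq, hpq, rfl⟩, ⟨r, s, hr, hs, hrs, rfl⟩⟩
    simp only [mem_singleton_iff] at hx'
    subst hx'
    exact ⟨r, s * p, s * q, hr, by positivity, by positivity,
      by nlinarith, by rw [smul_add, smul_smul, smul_smul, add_assoc]⟩
  · rintro ⟨w1, w2, w3, h1, h2, h3, hsum, rfl⟩
    refine ⟨x, rfl, ?_⟩
    rcases eq_or_lt_of_le (add_nonneg h2 h3 : (0:ℝ) ≤ w2 + w3) with h | h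
    · have hw2 : w2 = 0 := by linarith
      have hw3 : w3 = 0 := by linarith
      have hw1 : w1 = 1 := by linarith
      refine ⟨y, left_mem_segment ℝ y z, 1, 0, zero_le_one, le_refl _, by ring, ?_⟩
      simp [hw1, hw2, hw3]
    · set t := w2 + w3 with ht
      refine ⟨(w2/t) • y + (w3/t) • z, ⟨w2/t, w3/t, by positivity, by positivity, by field_simp; linarith, rfl⟩,
        w1, t, h1, le_of_lt h, by linarith, ?_⟩
      rw [smul_add, smul_smul, smul_smul, ← add_assoc]
      field_simp

lemma mem_hull3' {x y z v : ℝ × ℝ} :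
    v ∈ convexHull ℝ ({x, y, z} : Set (ℝ × ℝ)) ↔
    ∃ w1 w2 w3 : ℝ, 0 ≤ w1 ∧ 0 ≤ w2 ∧ 0 ≤ w3 ∧ w1 + w2 + w3 = 1 ∧
      w1 * x.1 + w2 * y.1 + w3 * z.1 = v.1 ∧ w1 * x.2 + w2 * y.2 + w3 * z.2 = v.2 := by
  rw [mem_hull3]
  constructor
  · rintro ⟨w1, w2, w3, h1, h2, h3, hs, hv⟩
    exact ⟨w1, w2, w3, h1, h2, h3, hs, by rw [← hv]; rfl, by rw [← hv]; rfl⟩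
  · rintro ⟨w1, w2, w3, h1, h2, h3, hs, hv1, hv2⟩
    exact ⟨w1, w2, w3, h1, h2, h3, hs, Prod.ext hv1 hv2⟩

lemma toR_fst (p : ℤ × ℤ) : (toR p).1 = (p.1 : ℝ) := rfl
lemma toR_snd (p : ℤ × ℤ) : (toR p).2 = (p.2 : ℝ) := rfl

lemma toR_inj {p q : ℤ × ℤ} (h : toR p = toR q) : p = q := by
  have h1 := congrArg Prod.fst h
  have h2 := congrArg Prod.snd h
  simp only [toR_fst, toR_snd, Int.cast_inj] at h1 h2
  exact Prod.ext h1 h2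

lemma prim_v {u : ℤ × ℤ} (hu : IsCoprime u.1 u.2) : ∃ v : ℤ × ℤ, det2 u v = 1 := by
  obtain ⟨a, b, hab⟩ := hu
  exact ⟨(-b, a), by simp [det2]; linarith⟩

lemma prim_ne {u : ℤ × ℤ} (hu : IsCoprime u.1 u.2) : ¬(u.1 = 0 ∧ u.2 = 0) := by
  rintro ⟨h1, h2⟩
  rw [h1, h2] at hu
  exact not_isCoprime_zero_zero hu

lemma parallel_prim {u z : ℤ × ℤ} (hu : IsCoprime u.1 u.2) (h : z.1 * u.2 = z.2 * u.1) :
    ∃ k : ℤ, z.1 = k * u.1 ∧ z.2 = k * u.2 := by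
  obtain ⟨a, b, hab⟩ := hu
  exact ⟨a * z.1 + b * z.2, by linear_combination z.1 * hab.symm + b * h,
    by linear_combination z.2 * hab.symm - a * h⟩

lemma ncard_le3 (x y z : ℤ × ℤ) : ({x, y, z} : Set (ℤ × ℤ)).ncard ≤ 3 := by
  apply le_trans (Set.ncard_insert_le _ _)
  have := Set.ncard_insert_le y ({z} : Set (ℤ × ℤ))
  simp at this ⊢
  omega

lemma ncard3 {x y z : ℤ × ℤ} (hxy : x ≠ y) (hxz : x ≠ z) (hyz : y ≠ z) :
    ({x, y, z} : Set (ℤ × ℤ)).ncard = 3 := by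
  rw [Set.ncard_insert_of_notMem (by simp [hxy, hxz]) (by simp),
      Set.ncard_insert_of_notMem (by simp [hyz]) (by simp), Set.ncard_singleton]

lemma ncard4 {x y z w : ℤ × ℤ} (hxy : x ≠ y) (hxz : x ≠ z) (hxw : x ≠ w)
    (hyz : y ≠ z) (hyw : y ≠ w) (hzw : z ≠ w) :
    ({x, y, z, w} : Set (ℤ × ℤ)).ncard = 4 := by
  rw [Set.ncard_insert_of_notMem (by simp [hxy, hxz, hxw]) (by simp)]
  rw [ncard3 hyz hyw hzw]


lemma not_interior_aux {C : Set (ℝ × ℝ)} {α β γ : ℝ} (hab : ¬(α = 0 ∧ β = 0))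
    (hf : ∀ y ∈ C, 0 ≤ α * y.1 + β * y.2 + γ) {m : ℝ × ℝ}
    (hm : α * m.1 + β * m.2 + γ = 0) : m ∉ interior C := by
  intro hint
  rw [mem_interior_iff_mem_nhds, Metric.mem_nhds_iff] at hint
  obtain ⟨ε, hε, hball⟩ := hint
  set t : ℝ := ε / (2 * (|α| + |β| + 1)) with htdef
  have hden : (0:ℝ) < 2 * (|α| + |β| + 1) := by positivity
  have ht : 0 < t := by positivity
  set y : ℝ × ℝ := (m.1 - t * α, m.2 - t * β) with hy
  have hyC : y ∈ C := by
    apply hball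
    rw [Metric.mem_ball, Prod.dist_eq]
    have h1 : dist y.1 m.1 = t * |α| := by
      rw [Real.dist_eq]; simp [hy, abs_mul, abs_of_pos ht]
    have h2 : dist y.2 m.2 = t * |β| := by
      rw [Real.dist_eq]; simp [hy, abs_mul, abs_of_pos ht]
    rw [h1, h2]
    have hα : t * |α| < ε := by
      rw [htdef, div_mul_eq_mul_div, div_lt_iff₀ hden]
      nlinarith [abs_nonneg α, abs_nonneg β, hε]
    have hβ : t * |β| < ε := by
      rw [htdef, div_mul_eq_mul_div, div_lt_iff₀ hden]
      nlinarith [abs_nonneg α, abs_nonneg β, hε]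
    exact max_lt hα hβ
  have := hf y hyC
  have hsq : 0 < α ^ 2 + β ^ 2 := by
    rcases (not_and_or.mp hab) with h | h
    · positivity
    · positivity
  have : α * y.1 + β * y.2 + γ = -(t * (α ^ 2 + β ^ 2)) := by
    simp [hy]; nlinarith [hm]
  nlinarith [hf y hyC]

end Helpers
lemma sub_coords (x y : ℤ × ℤ) : (x - y).1 = x.1 - y.1 ∧ (x - y).2 = x.2 - y.2 := ⟨rfl, rfl⟩

lemma triPts_std {p u w : ℤ × ℤ} (hu : IsCoprime u.1 u.2)
    (hd : det2 u (w - p) = 1 ∨ det2 u (w - p) = -1) :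
    triPts p (p + u + u) w = {p, p + u, p + u + u, w} := by
  have hd2 : (det2 u (w - p)) * (det2 u (w - p)) = 1 := by rcases hd with h | h <;> rw [h] <;> ring
  ext q
  simp only [triPts, mem_setOf_eq, mem_hull3', toR_fst, toR_snd, mem_insert_iff,
    mem_singleton_iff]
  constructor
  · rintro ⟨w1, w2, w3, h1, h2, h3, hsum, hq1, hq2⟩
    simp only [Prod.fst_add, Prod.snd_add, Int.cast_add] at hq1 hq2
    have key : (det2 u (w - p) : ℝ) * w3 = (det2 u (q - p) : ℝ) := by
      simp only [det2, Prod.fst_sub, Prod.snd_sub]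
      push_cast
      linear_combination (u.1 : ℝ) * hq2 - (u.2 : ℝ) * hq1 +
        ((u.2 : ℝ) * (p.1 : ℝ) - (u.1 : ℝ) * (p.2 : ℝ)) * hsum
    have hw3 : w3 = (det2 u (w - p) : ℝ) * (det2 u (q - p) : ℝ) := by
      have : ((det2 u (w-p) * det2 u (w-p) : ℤ) : ℝ) * w3
          = (det2 u (w-p) : ℝ) * (det2 u (q - p) : ℝ) := by push_cast; linear_combination (det2 u (w-p):ℝ) * key
      rw [hd2] at this; push_cast at this; linarith
    have hw3le : w3 ≤ 1 := by linarith
    set N : ℤ := det2 u (w - p) * det2 u (q - p) with hN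
    have hNR : (N : ℝ) = w3 := by push_cast [hN]; rw [hw3]
    have hN01 : N = 0 ∨ N = 1 := by
      have h0 : (0:ℝ) ≤ (N:ℝ) := by rw [hNR]; exact h3
      have h1' : (N:ℝ) ≤ 1 := by rw [hNR]; exact hw3le
      have : (0:ℤ) ≤ N := by exact_mod_cast h0
      have : N ≤ 1 := by exact_mod_cast h1'
      omega
    rcases hN01 with hN0 | hN1
    · -- w3 = 0, q on the segment
      have hw30 : w3 = 0 := by rw [← hNR, hN0]; norm_num
      obtain ⟨v, hv⟩ := prim_v hu
      set t : ℤ := det2 (q - p) v with ht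
      have htR : (t : ℝ) = 2 * w2 := by
        have e1 : (q.1 : ℝ) - p.1 = 2 * w2 * u.1 := by
          rw [← hq1]; rw [hw30] at hsum ⊢; linear_combination ((p.1:ℝ)) * hsum
        have e2 : (q.2 : ℝ) - p.2 = 2 * w2 * u.2 := by
          rw [← hq2]; rw [hw30] at hsum ⊢; linear_combination ((p.2:ℝ)) * hsum
        simp only [ht, det2, Prod.fst_sub, Prod.snd_sub]
        push_cast
        have hvR : (u.1 : ℝ) * v.2 - u.2 * v.1 = 1 := by exact_mod_cast congrArg (Int.cast : ℤ → ℝ) hv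
        linear_combination (v.2:ℝ) * e1 - (v.1:ℝ) * e2 + 2 * w2 * hvR
      have ht02 : t = 0 ∨ t = 1 ∨ t = 2 := by
        have h0 : (0:ℝ) ≤ (t:ℝ) := by rw [htR]; linarith
        have h2' : (t:ℝ) ≤ 2 := by rw [htR]; linarith
        have : (0:ℤ) ≤ t := by exact_mod_cast h0
        have : t ≤ 2 := by exact_mod_cast h2'
        omega
      have e1 : (q.1 : ℝ) - p.1 = (t:ℝ) * u.1 := by
        rw [htR, ← hq1]; rw [hw30] at hsum ⊢; linear_combination ((p.1:ℝ)) * hsum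
      have e2 : (q.2 : ℝ) - p.2 = (t:ℝ) * u.2 := by
        rw [htR, ← hq2]; rw [hw30] at hsum ⊢; linear_combination ((p.2:ℝ)) * hsum
      have e1' : q.1 = p.1 + t * u.1 := by exact_mod_cast (by linarith : (q.1:ℝ) = p.1 + t * u.1)
      have e2' : q.2 = p.2 + t * u.2 := by exact_mod_cast (by linarith : (q.2:ℝ) = p.2 + t * u.2)
      rcases ht02 with h | h | h
      · left; rw [h] at e1' e2'; simp at e1' e2'; exact Prod.ext e1' e2'
      · right; left; rw [h] at e1' e2'; simp at e1' e2'
        exact Prod.ext (by simp [Prod.fst_add, e1']) (by simp [Prod.snd_add, e2'])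
      · right; right; left; rw [h] at e1' e2'
        refine Prod.ext ?_ ?_ <;> simp [Prod.fst_add, Prod.snd_add] <;> omega
    · -- w3 = 1, q = w
      have hw31 : w3 = 1 := by rw [← hNR, hN1]; norm_num
      have hw1 : w1 = 0 := by linarith
      have hw2 : w2 = 0 := by linarith
      right; right; right
      rw [hw31, hw1, hw2] at hq1 hq2
      simp at hq1 hq2
      exact Prod.ext (by exact_mod_cast hq1.symm) (by exact_mod_cast hq2.symm)
  · rintro (rfl | rfl | rfl | rfl)
    · exact ⟨1, 0, 0, by norm_num, by norm_num, by norm_num, by norm_num, by push_cast; ring, by push_cast; ring⟩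
    · exact ⟨1/2, 1/2, 0, by norm_num, by norm_num, by norm_num, by norm_num,
        by simp [Prod.fst_add]; push_cast; ring, by simp [Prod.snd_add]; push_cast; ring⟩
    · exact ⟨0, 1, 0, by norm_num, by norm_num, by norm_num, by norm_num, by push_cast; ring, by push_cast; ring⟩
    · exact ⟨0, 0, 1, by norm_num, by norm_num, by norm_num, by norm_num, by push_cast; ring, by push_cast; ring⟩
lemma det2_self_zero (u : ℤ × ℤ) : det2 u u = 0 := by simp [det2]; ring

lemma ne_add_of_ne_zero {p u : ℤ × ℤ} (hu : ¬(u.1 = 0 ∧ u.2 = 0)) : p ≠ p + u := by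
  intro h
  have h1 := congrArg Prod.fst h
  have h2 := congrArg Prod.snd h
  simp only [Prod.fst_add, Prod.snd_add] at h1 h2
  exact hu ⟨by omega, by omega⟩

lemma std_distinct {p u w : ℤ × ℤ} (hu : IsCoprime u.1 u.2)
    (hd : det2 u (w - p) = 1 ∨ det2 u (w - p) = -1) :
    p ≠ p + u ∧ p ≠ p + u + u ∧ p + u ≠ p + u + u ∧ w ≠ p ∧ w ≠ p + u ∧ w ≠ p + u + u := by
  have hu0 := prim_ne hu
  have hne1 : p ≠ p + u := ne_add_of_ne_zero hu0
  have hne2 : p ≠ p + u + u := by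
    rw [add_assoc]
    exact ne_add_of_ne_zero (by simp only [Prod.fst_add, Prod.snd_add]; omega)
  have hne3 : p + u ≠ p + u + u := ne_add_of_ne_zero hu0
  have hwp : w ≠ p := by
    rintro rfl; rw [sub_self] at hd
    simp [det2] at hd
  have hwpu : w ≠ p + u := by
    rintro rfl
    rw [add_sub_cancel_left] at hd
    rcases hd with h | h <;> rw [det2_self_zero] at h <;> omega
  have hwpuu : w ≠ p + u + u := by
    rintro rfl
    have : p + u + u - p = u + u := by abel
    rw [this] at hd
    have h0 : det2 u (u + u) = 0 := by simp [det2]; ring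
    rcases hd with h | h <;> rw [h0] at h <;> omega
  exact ⟨hne1, hne2, hne3, hwp, hwpu, hwpuu⟩

lemma isBorderTri_std {p u w : ℤ × ℤ} (hu : IsCoprime u.1 u.2)
    (hd : det2 u (w - p) = 1 ∨ det2 u (w - p) = -1) :
    IsBorderTri {p, p + u, p + u + u, w} := by
  obtain ⟨hne1, hne2, hne3, hwp, hwpu, hwpuu⟩ := std_distinct hu hd
  have hu0 := prim_ne hu
  refine ⟨p, p + u + u, w, p + u, ?_, ?_, ?_, ?_, ?_⟩
  · -- det2 (p+u+u-p) (w-p) = 2 * det2 u (w-p) ≠ 0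
    have h1 : p + u + u - p = u + u := by abel
    rw [h1]
    have h2 : det2 (u + u) (w - p) = 2 * det2 u (w - p) := by simp [det2, Prod.fst_add, Prod.snd_add]; ring
    rw [h2]
    rcases hd with h | h <;> rw [h] <;> omega
  · exact (triPts_std hu hd).symm
  · ext x
    simp only [mem_insert_iff, mem_singleton_iff]
    tauto
  · exact ncard4 hne1 hne2 (Ne.symm hwp) hne3 (Ne.symm hwpu) (Ne.symm hwpuu)
  · -- midpoint not in interior
    set ε : ℤ := det2 u (w - p) with hε
    apply not_interior_aux (α := -((ε * u.2 : ℤ) : ℝ)) (β := ((ε * u.1 : ℤ) : ℝ))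
      (γ := ((ε * (u.2 * p.1 - u.1 * p.2) : ℤ) : ℝ))
    · rintro ⟨ha, hb⟩
      have hε1 : ε = 1 ∨ ε = -1 := hd
      have h2 : (ε * u.2 : ℤ) = 0 := by
        have : ((ε * u.2 : ℤ) : ℝ) = 0 := by linarith [ha]
        exact_mod_cast this
      have h1 : (ε * u.1 : ℤ) = 0 := by exact_mod_cast hb
      rcases hε1 with h | h <;> rw [h] at h1 h2 <;> exact hu0 ⟨by omega, by omega⟩
    · intro y hy
      rw [mem_hull3'] at hy
      obtain ⟨w1, w2, w3, h1, h2, h3, hsum, hy1, hy2⟩ := hy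
      simp only [toR_fst, toR_snd, Prod.fst_add, Prod.snd_add, Int.cast_add] at hy1 hy2
      have key : -((ε * u.2 : ℤ) : ℝ) * y.1 + ((ε * u.1 : ℤ) : ℝ) * y.2
          + ((ε * (u.2 * p.1 - u.1 * p.2) : ℤ) : ℝ) = w3 * ((ε * det2 u (w - p) : ℤ) : ℝ) := by
        simp only [det2, Prod.fst_sub, Prod.snd_sub]
        push_cast
        linear_combination ((ε:ℝ) * u.2) * hy1 - ((ε:ℝ) * u.1) * hy2 +
          ((ε:ℝ) * ((u.1:ℝ) * (p.2:ℝ) - (u.2:ℝ) * (p.1:ℝ))) * hsum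
      rw [key]
      have : (ε * det2 u (w - p) : ℤ) = 1 := by
        rw [← hε]
        rcases hd with h | h <;> rw [h] <;> norm_num
      rw [this]
      simp [h3]
    · simp only [toR_fst, toR_snd, Prod.fst_add, Prod.snd_add]
      push_cast
      ring
lemma bstep {S : Set (ℤ × ℤ)} (hB : BStable S) {p u w : ℤ × ℤ} (hu : IsCoprime u.1 u.2)
    (hd : det2 u (w - p) = 1 ∨ det2 u (w - p) = -1)
    (h0 : p ∈ S) (h1 : p + u ∈ S) (h2 : p + u + u ∈ S) : w ∈ S := by
  by_contra hw
  obtain ⟨hne1, hne2, hne3, hwp, hwpu, hwpuu⟩ := std_distinct hu hd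
  apply hB _ (isBorderTri_std hu hd)
  have : ({p, p + u, p + u + u, w} : Set (ℤ × ℤ)) ∩ S = {p, p + u, p + u + u} := by
    ext x
    simp only [mem_inter_iff, mem_insert_iff, mem_singleton_iff]
    constructor
    · rintro ⟨rfl | rfl | rfl | rfl, hxS⟩ <;> tauto
    · rintro (rfl | rfl | rfl) <;> exact ⟨by tauto, by assumption⟩
  rw [this]
  exact ncard3 hne1 hne2 hne3

lemma no_triple {S : Set (ℤ × ℤ)} (hB : BStable S) (hS : S ≠ Set.univ) {p u : ℤ × ℤ}
    (hu : IsCoprime u.1 u.2) (h0 : p ∈ S) (h1 : p + u ∈ S) (h2 : p + u + u ∈ S) : False := by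
  obtain ⟨v, hv⟩ := prim_v hu
  set pt : ℤ → ℤ → ℤ × ℤ := fun k m => (p.1 + k * u.1 + m * v.1, p.2 + k * u.2 + m * v.2) with hpt
  have hptu : ∀ k m : ℤ, pt k m + u = pt (k+1) m := by
    intro k m; apply Prod.ext <;> simp [hpt, Prod.fst_add, Prod.snd_add] <;> ring
  have hdet : ∀ k m k' m' : ℤ, det2 u (pt k m - pt k' m') = (m - m') * det2 u v := by
    intro k m k' m'; simp [hpt, det2, Prod.fst_sub, Prod.snd_sub]; ring
  -- step: if a whole row is in S, the two adjacent rows are in S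
  have step : ∀ m : ℤ, (∀ k : ℤ, pt k m ∈ S) → ∀ e : ℤ, (e = 1 ∨ e = -1) →
      ∀ k : ℤ, pt k (m + e) ∈ S := by
    intro m hm e he k
    apply bstep hB hu (p := pt 0 m) (w := pt k (m + e))
    · rw [hdet]
      rcases he with rfl | rfl <;> rw [hv] <;> [left; right] <;> ring
    · exact hm 0
    · rw [hptu]; exact hm 1
    · rw [hptu, hptu]; exact hm 2
  -- base: rows 1 and -1 are fully in S
  have base : ∀ e : ℤ, (e = 1 ∨ e = -1) → ∀ k : ℤ, pt k e ∈ S := by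
    intro e he k
    apply bstep hB hu (p := p) (w := pt k e)
    · have : pt k e - p = pt k e - pt 0 0 := by
        apply congrArg; apply Prod.ext <;> simp [hpt]
      rw [this, hdet]
      rcases he with rfl | rfl <;> rw [hv] <;> [left; right] <;> ring
    · exact h0
    · exact h1
    · exact h2
  have row0 : ∀ k : ℤ, pt k 0 ∈ S := by
    have := step 1 (base 1 (Or.inl rfl)) (-1) (Or.inr rfl)
    simpa using this
  have allrows : ∀ m : ℤ, ∀ k : ℤ, pt k m ∈ S := by
    intro m
    induction m using Int.induction_on with
    | zero => exact row0
    | succ n ih => exact step n ih 1 (Or.inl rfl)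
    | pred n ih =>
        have := step (-(n:ℤ)) ih (-1) (Or.inr rfl)
        intro k
        have h' : (-(n:ℤ) + -1) = (-(n:ℤ) - 1) := by ring
        rw [h'] at this
        exact this k
  apply hS
  rw [Set.eq_univ_iff_forall]
  intro q
  have hv' : u.1 * v.2 - u.2 * v.1 = 1 := hv
  have hq : q = pt (det2 (q - p) v) (det2 u (q - p)) := by
    apply Prod.ext
    · simp only [hpt, det2, Prod.fst_sub, Prod.snd_sub]
      linear_combination (p.1 - q.1) * hv'
    · simp only [hpt, det2, Prod.fst_sub, Prod.snd_sub]
      linear_combination (p.2 - q.2) * hv'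
  rw [hq]
  exact allrows _ _
lemma hull3_mem_of_weights {p x y : ℤ × ℤ} {q : ℤ × ℤ} {w1 w2 w3 : ℝ}
    (h1 : 0 ≤ w1) (h2 : 0 ≤ w2) (h3 : 0 ≤ w3) (hs : w1 + w2 + w3 = 1)
    (e1 : (q.1 : ℝ) = w1 * p.1 + w2 * ((p.1 : ℝ) + x.1) + w3 * ((p.1 : ℝ) + y.1))
    (e2 : (q.2 : ℝ) = w1 * p.2 + w2 * ((p.2 : ℝ) + x.2) + w3 * ((p.2 : ℝ) + y.2)) :
    toR q ∈ convexHull ℝ ({toR p, toR (p + x), toR (p + y)} : Set (ℝ × ℝ)) := by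
  rw [mem_hull3']
  refine ⟨w1, w2, w3, h1, h2, h3, hs, ?_, ?_⟩
  · simp only [toR_fst, Prod.fst_add]; push_cast; linarith
  · simp only [toR_snd, Prod.snd_add]; push_cast; linarith

lemma eq_pt_coords {a b : ℤ × ℤ} (h : a = b) : a.1 = b.1 ∧ a.2 = b.2 :=
  ⟨congrArg Prod.fst h, congrArg Prod.snd h⟩

lemma empty_core {p x y : ℤ × ℤ} {D : ℤ} (hD : det2 x y = D) (hD2 : 2 ≤ D)
    (he : ∀ q : ℤ × ℤ, toR q ∈ convexHull ℝ ({toR p, toR (p + x), toR (p + y)} : Set (ℝ × ℝ)) →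
      q = p ∨ q = p + x ∨ q = p + y) : False := by
  have hD' : x.1 * y.2 - x.2 * y.1 = D := hD
  have hx0 : ¬(x.1 = 0 ∧ x.2 = 0) := by
    rintro ⟨a, b⟩; rw [a, b] at hD'; omega
  have hg : Int.gcd x.1 x.2 ≠ 0 := fun h0 => hx0 (Int.gcd_eq_zero_iff.mp h0)
  have hprim : IsCoprime x.1 x.2 := by
    rcases Nat.lt_or_ge (Int.gcd x.1 x.2) 2 with hlt | hge
    · rw [Int.isCoprime_iff_gcd_eq_one]; omega
    · exfalso
      obtain ⟨u1, hu1⟩ := (Int.gcd_dvd_left _ _ : ((Int.gcd x.1 x.2 : ℤ)) ∣ x.1)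
      obtain ⟨u2, hu2⟩ := (Int.gcd_dvd_right _ _ : ((Int.gcd x.1 x.2 : ℤ)) ∣ x.2)
      set g : ℤ := (Int.gcd x.1 x.2 : ℤ) with hgdef
      have hg2 : (2:ℤ) ≤ g := by rw [hgdef]; exact_mod_cast hge
      set u : ℤ × ℤ := (u1, u2) with hu
      have hx1 : x.1 = g * u.1 := hu1
      have hx2 : x.2 = g * u.2 := hu2
      have hgR : (0:ℝ) < (g:ℝ) := by exact_mod_cast (by omega : (0:ℤ) < g)
      have hgR2 : (2:ℝ) ≤ (g:ℝ) := by exact_mod_cast hg2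
      have hmem : toR (p + u) ∈ convexHull ℝ ({toR p, toR (p + x), toR (p + y)} : Set (ℝ × ℝ)) := by
        apply hull3_mem_of_weights (w1 := 1 - 1/(g:ℝ)) (w2 := 1/(g:ℝ)) (w3 := 0)
        · have : 1/(g:ℝ) ≤ 1 := by rw [div_le_one hgR]; linarith
          linarith
        · positivity
        · exact le_refl 0
        · ring
        · simp only [Prod.fst_add]
          have : (x.1 : ℝ) = (g:ℝ) * (u.1:ℝ) := by exact_mod_cast hx1
          push_cast
          rw [this]; field_simp; ring
        · simp only [Prod.snd_add]
          have : (x.2 : ℝ) = (g:ℝ) * (u.2:ℝ) := by exact_mod_cast hx2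
          push_cast
          rw [this]; field_simp; ring
      rcases he _ hmem with h | h | h
      · obtain ⟨h1, h2⟩ := eq_pt_coords h
        simp only [Prod.fst_add, Prod.snd_add, hu] at h1 h2
        refine hx0 ⟨?_, ?_⟩
        · have hz1 : u1 = 0 := by omega
          rw [hx1]; show g * u1 = 0; rw [hz1, mul_zero]
        · have hz2 : u2 = 0 := by omega
          rw [hx2]; show g * u2 = 0; rw [hz2, mul_zero]
      · obtain ⟨h1, h2⟩ := eq_pt_coords h
        simp only [Prod.fst_add, Prod.snd_add, hu] at h1 h2
        have e1 : u1 = x.1 := by omega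
        have e2 : u2 = x.2 := by omega
        rw [e1] at hu1
        rw [e2] at hu2
        have f1 : x.1 * (g - 1) = 0 := by linear_combination -hu1
        have f2 : x.2 * (g - 1) = 0 := by linear_combination -hu2
        refine hx0 ⟨?_, ?_⟩
        · rcases mul_eq_zero.mp f1 with h' | h'
          · exact h'
          · omega
        · rcases mul_eq_zero.mp f2 with h' | h'
          · exact h'
          · omega
      · obtain ⟨h1, h2⟩ := eq_pt_coords h
        simp only [Prod.fst_add, Prod.snd_add, hu] at h1 h2
        have hy1 : y.1 = u1 := by omega
        have hy2 : y.2 = u2 := by omega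
        rw [hy1, hy2, hu1, hu2] at hD'
        have : D = 0 := by linear_combination -hD'
        omega
  obtain ⟨v, hv⟩ := prim_v hprim
  have hv' : x.1 * v.2 - x.2 * v.1 = 1 := hv
  have hpar : ((y.1 - D * v.1, y.2 - D * v.2) : ℤ × ℤ).1 * x.2
      = ((y.1 - D * v.1, y.2 - D * v.2) : ℤ × ℤ).2 * x.1 := by
    show (y.1 - D * v.1) * x.2 = (y.2 - D * v.2) * x.1
    linear_combination (-1) * hD' + (D:ℤ) * hv'
  obtain ⟨s, hs1, hs2⟩ := parallel_prim hprim hpar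
  have hs1' : y.1 - D * v.1 = s * x.1 := hs1
  have hs2' : y.2 - D * v.2 = s * x.2 := hs2
  have hy1 : y.1 = s * x.1 + D * v.1 := by linarith
  have hy2 : y.2 = s * x.2 + D * v.2 := by linarith
  set r : ℤ := s % D with hr
  set qq : ℤ := s / D with hq
  have hsr : s = D * qq + r := by rw [hr, hq]; linarith [Int.mul_ediv_add_emod s D]
  have hr0 : 0 ≤ r := Int.emod_nonneg s (by omega)
  have hrD : r < D := Int.emod_lt_of_pos s (by omega)
  set c : ℤ := if r = 0 then qq else qq + 1 with hc
  have e0 : qq * D = D * qq := mul_comm _ _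
  have hr1 : r ≠ 0 → 1 ≤ r := fun h => by omega
  have e1 : (qq + 1) * D = D * qq + D := by ring
  have hint1 : s ≤ c * D := by
    rcases eq_or_ne r 0 with h | h
    · rw [hc, if_pos h]; linarith
    · rw [hc, if_neg h]; linarith
  have hint2 : c * D + 1 ≤ D + s := by
    rcases eq_or_ne r 0 with h | h
    · rw [hc, if_pos h]; linarith
    · rw [hc, if_neg h]; linarith [hr1 h]
  set z : ℤ × ℤ := (p.1 + c * x.1 + v.1, p.2 + c * x.2 + v.2) with hz
  have hDR : (0:ℝ) < (D:ℝ) := by exact_mod_cast (by omega : (0:ℤ) < D)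
  set w2 : ℝ := (c:ℝ) - (s:ℝ)/(D:ℝ) with hw2
  set w3 : ℝ := 1/(D:ℝ) with hw3
  have hint1R : (s:ℝ) ≤ (c:ℝ) * (D:ℝ) := by exact_mod_cast hint1
  have hint2R : (c:ℝ) * (D:ℝ) + 1 ≤ (D:ℝ) + (s:ℝ) := by exact_mod_cast hint2
  have hw2' : 0 ≤ w2 := by
    rw [hw2, sub_nonneg, div_le_iff₀ hDR]; linarith
  have hw3' : 0 < w3 := by positivity
  have hw23 : w2 + w3 ≤ 1 := by
    rw [hw2, hw3]
    have : (c:ℝ) - (s:ℝ)/(D:ℝ) + 1/(D:ℝ) = ((c:ℝ)*(D:ℝ) - (s:ℝ) + 1)/(D:ℝ) := by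
      field_simp
    rw [this, div_le_one hDR]; linarith
  have hyR1 : (y.1 : ℝ) = (s:ℝ) * x.1 + (D:ℝ) * v.1 := by exact_mod_cast hy1
  have hyR2 : (y.2 : ℝ) = (s:ℝ) * x.2 + (D:ℝ) * v.2 := by exact_mod_cast hy2
  have hmem : toR z ∈ convexHull ℝ ({toR p, toR (p + x), toR (p + y)} : Set (ℝ × ℝ)) := by
    apply hull3_mem_of_weights (w1 := 1 - w2 - w3) (w2 := w2) (w3 := w3)
    · linarith
    · exact hw2'
    · linarith
    · ring
    · show ((z.1 : ℤ) : ℝ) = _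
      rw [hz]
      push_cast
      rw [hw2, hw3, hyR1]
      field_simp
      ring
    · show ((z.2 : ℤ) : ℝ) = _
      rw [hz]
      push_cast
      rw [hw2, hw3, hyR2]
      field_simp
      ring
  rcases he _ hmem with h | h | h
  · obtain ⟨h1, h2⟩ := eq_pt_coords h
    rw [hz] at h1 h2
    simp only at h1 h2
    have e1 : v.1 = -(c * x.1) := by linarith
    have e2 : v.2 = -(c * x.2) := by linarith
    rw [e1, e2] at hv'
    have : (1:ℤ) = 0 := by linear_combination -hv'
    omega
  · obtain ⟨h1, h2⟩ := eq_pt_coords h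
    rw [hz] at h1 h2
    simp only [Prod.fst_add, Prod.snd_add] at h1 h2
    have e1 : v.1 = (1 - c) * x.1 := by linear_combination h1
    have e2 : v.2 = (1 - c) * x.2 := by linear_combination h2
    rw [e1, e2] at hv'
    have : (1:ℤ) = 0 := by linear_combination -hv'
    omega
  · obtain ⟨h1, h2⟩ := eq_pt_coords h
    rw [hz] at h1 h2
    simp only [Prod.fst_add, Prod.snd_add] at h1 h2
    have e1 : y.1 = c * x.1 + v.1 := by linarith
    have e2 : y.2 = c * x.2 + v.2 := by linarith
    have : D = 1 := by linear_combination (-1) * hD' + hv' + x.1 * e2 - x.2 * e1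
    omega

lemma empty_unimodular {p x y : ℤ × ℤ} (hxy : det2 x y ≠ 0)
    (he : ∀ q : ℤ × ℤ, toR q ∈ convexHull ℝ ({toR p, toR (p + x), toR (p + y)} : Set (ℝ × ℝ)) →
      q = p ∨ q = p + x ∨ q = p + y) : det2 x y = 1 ∨ det2 x y = -1 := by
  by_contra hcon
  push_neg at hcon
  obtain ⟨hc1, hc2⟩ := hcon
  rcases lt_or_gt_of_ne hxy with hlt | hgt
  · -- det2 y x = - det2 x y ≥ 2
    have hyx : det2 y x = - det2 x y := by simp [det2]; ring
    apply empty_core (p := p) (x := y) (y := x) (D := - det2 x y) hyx (by omega)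
    intro q hq
    have hset : ({toR p, toR (p + y), toR (p + x)} : Set (ℝ × ℝ))
        = {toR p, toR (p + x), toR (p + y)} := by
      ext w; simp only [mem_insert_iff, mem_singleton_iff]; tauto
    rw [hset] at hq
    rcases he q hq with h | h | h <;> tauto
  · exact empty_core (D := det2 x y) rfl (by omega) he
lemma seg_contra {S : Set (ℤ × ℤ)} (hB : BStable S) (hS : S ≠ Set.univ)
    {p q d : ℤ × ℤ} (hdp : d ≠ p) (t : ℝ) (ht0 : 0 < t) (ht1 : t < 1)
    (h1 : (d.1 : ℝ) = p.1 + t * ((q.1 : ℝ) - p.1))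
    (h2 : (d.2 : ℝ) = p.2 + t * ((q.2 : ℝ) - p.2))
    (hmem : ∀ (x : ℤ × ℤ) (r : ℝ), 0 ≤ r → r ≤ 1 →
      (x.1 : ℝ) = p.1 + r * ((q.1 : ℝ) - p.1) → (x.2 : ℝ) = p.2 + r * ((q.2 : ℝ) - p.2) →
      x ∈ S) : False := by
  -- z = d - p ≠ 0
  have hz0 : ¬((d.1 - p.1 : ℤ) = 0 ∧ (d.2 - p.2 : ℤ) = 0) := by
    rintro ⟨a, b⟩
    exact hdp (Prod.ext (by omega) (by omega))
  obtain ⟨u1, hu1⟩ := (Int.gcd_dvd_left _ _ : ((Int.gcd (d.1 - p.1) (d.2 - p.2) : ℤ)) ∣ (d.1 - p.1))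
  obtain ⟨u2, hu2⟩ := (Int.gcd_dvd_right _ _ : ((Int.gcd (d.1 - p.1) (d.2 - p.2) : ℤ)) ∣ (d.2 - p.2))
  set g : ℤ := (Int.gcd (d.1 - p.1) (d.2 - p.2) : ℤ) with hgdef
  have hgne : g ≠ 0 := by
    rw [hgdef]
    intro h
    have : Int.gcd (d.1 - p.1) (d.2 - p.2) = 0 := by exact_mod_cast h
    exact hz0 (Int.gcd_eq_zero_iff.mp this)
  have hg1 : 1 ≤ g := by
    have : 0 ≤ g := by rw [hgdef]; positivity
    omega
  set u : ℤ × ℤ := (u1, u2) with hudef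
  have hu : IsCoprime u.1 u.2 := by
    rw [Int.isCoprime_iff_gcd_eq_one]
    show Int.gcd u1 u2 = 1
    have h1' : u1 = (d.1 - p.1) / g := by
      rw [hu1]; rw [Int.mul_ediv_cancel_left _ hgne]
    have h2' : u2 = (d.2 - p.2) / g := by
      rw [hu2]; rw [Int.mul_ediv_cancel_left _ hgne]
    rw [h1', h2', hgdef]
    exact Int.gcd_div_gcd_div_gcd (by omega)
  -- real equations:  g * u = t * (q - p)
  have hgu1 : ((g : ℝ)) * u1 = t * ((q.1:ℝ) - p.1) := by
    have : ((d.1 - p.1 : ℤ) : ℝ) = (g:ℝ) * u1 := by exact_mod_cast hu1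
    push_cast at this ⊢
    linarith
  have hgu2 : ((g : ℝ)) * u2 = t * ((q.2:ℝ) - p.2) := by
    have : ((d.2 - p.2 : ℤ) : ℝ) = (g:ℝ) * u2 := by exact_mod_cast hu2
    push_cast at this ⊢
    linarith
  -- q - p is an integer multiple of u
  have hpar : ((q.1 - p.1, q.2 - p.2) : ℤ × ℤ).1 * u.2 = ((q.1 - p.1, q.2 - p.2) : ℤ × ℤ).2 * u.1 := by
    show (q.1 - p.1) * u2 = (q.2 - p.2) * u1
    have hR : ((q.1 - p.1 : ℤ) : ℝ) * u2 = ((q.2 - p.2 : ℤ) : ℝ) * u1 := by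
      push_cast
      have e1 : t * (((q.1:ℝ) - p.1) * u2) = t * (((q.2:ℝ) - p.2) * u1) := by
        calc t * (((q.1:ℝ) - p.1) * u2) = (t * ((q.1:ℝ) - p.1)) * u2 := by ring
        _ = ((g:ℝ) * u1) * u2 := by rw [hgu1]
        _ = ((g:ℝ) * u2) * u1 := by ring
        _ = (t * ((q.2:ℝ) - p.2)) * u1 := by rw [hgu2]
        _ = t * (((q.2:ℝ) - p.2) * u1) := by ring
      have := mul_left_cancel₀ (ne_of_gt ht0) e1
      linarith
    exact_mod_cast hR
  obtain ⟨s, hs1, hs2⟩ := parallel_prim hu hpar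
  have hs1' : q.1 - p.1 = s * u1 := hs1
  have hs2' : q.2 - p.2 = s * u2 := hs2
  -- g = t * s  and  s ≥ 2
  have hu0 : ¬(u1 = 0 ∧ u2 = 0) := by
    rintro ⟨a, b⟩
    exact hz0 ⟨by rw [hu1, a, mul_zero], by rw [hu2, b, mul_zero]⟩
  have hgs : (g : ℝ) = t * s := by
    have e1 : (g:ℝ) * u1 = (t * s) * u1 := by
      rw [hgu1]
      have : ((q.1 - p.1 : ℤ) : ℝ) = (s:ℝ) * u1 := by exact_mod_cast hs1'
      push_cast at this
      calc t * ((q.1:ℝ) - p.1) = t * ((s:ℝ) * u1) := by rw [this]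
      _ = (t * s) * u1 := by ring
    have e2 : (g:ℝ) * u2 = (t * s) * u2 := by
      rw [hgu2]
      have : ((q.2 - p.2 : ℤ) : ℝ) = (s:ℝ) * u2 := by exact_mod_cast hs2'
      push_cast at this
      calc t * ((q.2:ℝ) - p.2) = t * ((s:ℝ) * u2) := by rw [this]
      _ = (t * s) * u2 := by ring
    rcases not_and_or.mp hu0 with h | h
    · have : (u1 : ℝ) ≠ 0 := by exact_mod_cast h
      exact mul_right_cancel₀ this e1
    · have : (u2 : ℝ) ≠ 0 := by exact_mod_cast h
      exact mul_right_cancel₀ this e2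
  have hgR1 : (1:ℝ) ≤ (g:ℝ) := by exact_mod_cast hg1
  have hs2le : 2 ≤ s := by
    have hspos : (0:ℝ) < (s:ℝ) := by nlinarith
    have hs1R : (1:ℝ) < (s:ℝ) := by nlinarith
    have : (1:ℤ) < s := by exact_mod_cast hs1R
    omega
  have hsR : (0:ℝ) < (s:ℝ) := by
    have : (0:ℤ) < s := by omega
    exact_mod_cast this
  -- the three points p, p+u, p+u+u are in S
  have hp : p ∈ S := hmem p 0 (le_refl 0) (by norm_num) (by ring) (by ring)
  have hpu : p + u ∈ S := by
    apply hmem (p + u) (1/(s:ℝ)) (by positivity)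
      (by rw [div_le_one hsR]; exact_mod_cast (by omega : (1:ℤ) ≤ s))
    · show ((p.1 + u1 : ℤ) : ℝ) = (p.1:ℝ) + 1/(s:ℝ) * ((q.1:ℝ) - p.1)
      have : ((q.1 - p.1 : ℤ) : ℝ) = (s:ℝ) * u1 := by exact_mod_cast hs1'
      push_cast at this ⊢
      rw [show (q.1:ℝ) - p.1 = (s:ℝ) * u1 from this]
      field_simp
      all_goals ring
    · show ((p.2 + u2 : ℤ) : ℝ) = (p.2:ℝ) + 1/(s:ℝ) * ((q.2:ℝ) - p.2)
      have : ((q.2 - p.2 : ℤ) : ℝ) = (s:ℝ) * u2 := by exact_mod_cast hs2'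
      push_cast at this ⊢
      rw [show (q.2:ℝ) - p.2 = (s:ℝ) * u2 from this]
      field_simp
      all_goals ring
  have hpuu : p + u + u ∈ S := by
    apply hmem (p + u + u) (2/(s:ℝ)) (by positivity)
      (by rw [div_le_one hsR]; exact_mod_cast (by omega : (2:ℤ) ≤ s))
    · show ((p.1 + u1 + u1 : ℤ) : ℝ) = (p.1:ℝ) + 2/(s:ℝ) * ((q.1:ℝ) - p.1)
      have : ((q.1 - p.1 : ℤ) : ℝ) = (s:ℝ) * u1 := by exact_mod_cast hs1'
      push_cast at this ⊢
      rw [show (q.1:ℝ) - p.1 = (s:ℝ) * u1 from this]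
      field_simp
      all_goals ring
    · show ((p.2 + u2 + u2 : ℤ) : ℝ) = (p.2:ℝ) + 2/(s:ℝ) * ((q.2:ℝ) - p.2)
      have : ((q.2 - p.2 : ℤ) : ℝ) = (s:ℝ) * u2 := by exact_mod_cast hs2'
      push_cast at this ⊢
      rw [show (q.2:ℝ) - p.2 = (s:ℝ) * u2 from this]
      field_simp
      all_goals ring
  exact no_triple hB hS hu hp hpu hpuu
lemma ncard_le4 (x y z w : ℤ × ℤ) : ({x, y, z, w} : Set (ℤ × ℤ)).ncard ≤ 4 := by
  apply le_trans (Set.ncard_insert_le _ _)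
  have := ncard_le3 y z w
  omega

lemma no_full {S : Set (ℤ × ℤ)} (hB : BStable S) (hS : S ≠ Set.univ)
    {a b c d : ℤ × ℤ} (hdet : det2 (b - a) (c - a) ≠ 0)
    (hT : triPts a b c = {a, b, c, d})
    (hda : d ≠ a) (hdb : d ≠ b) (hdc : d ≠ c)
    (hsub : ({a, b, c, d} : Set (ℤ × ℤ)) ⊆ S) : False := by
  have hdet' : (b.1 - a.1) * (c.2 - a.2) - (b.2 - a.2) * (c.1 - a.1) ≠ 0 := hdet
  have hac : a ≠ c := by
    rintro rfl
    exact hdet' (by ring)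
  have hd_mem : toR d ∈ convexHull ℝ ({toR a, toR b, toR c} : Set (ℝ × ℝ)) := by
    have : d ∈ triPts a b c := by rw [hT]; simp
    exact this
  obtain ⟨l, m, n, hl, hm, hn, hsum, hd1, hd2⟩ := mem_hull3'.mp hd_mem
  simp only [toR_fst, toR_snd] at hd1 hd2
  -- basic memberships
  have ha_in : a ∈ S := hsub (by simp)
  have hb_in : b ∈ S := hsub (by simp)
  have hc_in : c ∈ S := hsub (by simp)
  have hd_in : d ∈ S := hsub (by simp)
  -- segment case helper facts
  have hda' : toR d ≠ toR a := fun h => hda (toR_inj h)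
  have hdb' : toR d ≠ toR b := fun h => hdb (toR_inj h)
  have hdc' : toR d ≠ toR c := fun h => hdc (toR_inj h)
  rcases eq_or_lt_of_le hm with hm0 | hmpos
  · -- m = 0 : d on segment [a, c]
    have hm0 : m = 0 := hm0.symm
    have hl' : l = 1 - n := by rw [hm0] at hsum; linarith
    have hn0 : n ≠ 0 := by
      intro h
      apply hda'
      rw [hm0, hl', h] at hd1 hd2
      refine Prod.ext ?_ ?_ <;> simp only [toR_fst, toR_snd] <;> linarith
    have hn1 : n ≠ 1 := by
      intro h
      apply hdc'
      rw [hm0, hl', h] at hd1 hd2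
      refine Prod.ext ?_ ?_ <;> simp only [toR_fst, toR_snd] <;> linarith
    apply seg_contra hB hS (p := a) (q := c) (d := d) hda n
      (lt_of_le_of_ne hn (Ne.symm hn0)) (lt_of_le_of_ne (by linarith [hl, hl']) hn1)
    · rw [hm0, hl'] at hd1; linarith
    · rw [hm0, hl'] at hd2; linarith
    · intro x r hr0 hr1 e1 e2
      apply hsub
      rw [← hT]
      simp only [triPts, mem_setOf_eq]
      rw [mem_hull3']
      exact ⟨1 - r, 0, r, by linarith, le_refl 0, hr0, by ring,
        by simp only [toR_fst]; linarith, by simp only [toR_snd]; linarith⟩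
  rcases eq_or_lt_of_le hl with hl0 | hlpos
  · -- l = 0 : d on segment [b, c]
    have hl0 : l = 0 := hl0.symm
    have hm' : m = 1 - n := by rw [hl0] at hsum; linarith
    have hn0 : n ≠ 0 := by
      intro h
      apply hdb'
      rw [hl0, hm', h] at hd1 hd2
      refine Prod.ext ?_ ?_ <;> simp only [toR_fst, toR_snd] <;> linarith
    have hn1 : n ≠ 1 := by
      intro h
      apply hdc'
      rw [hl0, hm', h] at hd1 hd2
      refine Prod.ext ?_ ?_ <;> simp only [toR_fst, toR_snd] <;> linarith
    apply seg_contra hB hS (p := b) (q := c) (d := d) hdb n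
      (lt_of_le_of_ne hn (Ne.symm hn0)) (lt_of_le_of_ne (by linarith [hm, hm']) hn1)
    · rw [hl0, hm'] at hd1; linarith
    · rw [hl0, hm'] at hd2; linarith
    · intro x r hr0 hr1 e1 e2
      apply hsub
      rw [← hT]
      simp only [triPts, mem_setOf_eq]
      rw [mem_hull3']
      exact ⟨0, 1 - r, r, le_refl 0, by linarith, hr0, by ring,
        by simp only [toR_fst]; linarith, by simp only [toR_snd]; linarith⟩
  rcases eq_or_lt_of_le hn with hn0 | hnpos
  · -- n = 0 : d on segment [a, b]
    have hn0 : n = 0 := hn0.symm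
    have hl' : l = 1 - m := by rw [hn0] at hsum; linarith
    have hm0 : m ≠ 0 := by
      intro h
      apply hda'
      rw [hn0, hl', h] at hd1 hd2
      refine Prod.ext ?_ ?_ <;> simp only [toR_fst, toR_snd] <;> linarith
    have hm1 : m ≠ 1 := by
      intro h
      apply hdb'
      rw [hn0, hl', h] at hd1 hd2
      refine Prod.ext ?_ ?_ <;> simp only [toR_fst, toR_snd] <;> linarith
    apply seg_contra hB hS (p := a) (q := b) (d := d) hda m
      (lt_of_le_of_ne hm (Ne.symm hm0)) (lt_of_le_of_ne (by linarith [hl, hl']) hm1)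
    · rw [hn0, hl'] at hd1; linarith
    · rw [hn0, hl'] at hd2; linarith
    · intro x r hr0 hr1 e1 e2
      apply hsub
      rw [← hT]
      simp only [triPts, mem_setOf_eq]
      rw [mem_hull3']
      exact ⟨1 - r, r, 0, by linarith, hr0, le_refl 0, by ring,
        by simp only [toR_fst]; linarith, by simp only [toR_snd]; linarith⟩
  -- main case : all barycentric coordinates positive
  set DR : ℝ := ((det2 (b - a) (c - a) : ℤ) : ℝ) with hDRdef
  have hDRne : DR ≠ 0 := by
    rw [hDRdef]
    exact_mod_cast hdet
  have hDRexp : DR = ((b.1:ℝ) - a.1) * ((c.2:ℝ) - a.2) - ((b.2:ℝ) - a.2) * ((c.1:ℝ) - a.1) := by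
    rw [hDRdef]; show ((det2 (b-a) (c-a) : ℤ) : ℝ) = _
    simp only [det2, Prod.fst_sub, Prod.snd_sub]
    push_cast
    ring
  have hm1 : m < 1 := by linarith
  -- hull {d, a, c} is contained in the big triangle
  have hsubhull : convexHull ℝ ({toR d, toR a, toR c} : Set (ℝ × ℝ))
      ⊆ convexHull ℝ ({toR a, toR b, toR c} : Set (ℝ × ℝ)) := by
    apply convexHull_min ?_ (convex_convexHull ℝ _)
    intro x hx
    simp only [mem_insert_iff, mem_singleton_iff] at hx
    rcases hx with rfl | rfl | rfl
    · exact hd_mem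
    · exact subset_convexHull ℝ _ (by simp)
    · exact subset_convexHull ℝ _ (by simp)
  -- b is not in hull {d, a, c}
  have hFd : ((d.1:ℝ) - a.1) * ((c.2:ℝ) - a.2) - ((d.2:ℝ) - a.2) * ((c.1:ℝ) - a.1)
      = m * (((b.1:ℝ) - a.1) * ((c.2:ℝ) - a.2) - ((b.2:ℝ) - a.2) * ((c.1:ℝ) - a.1)) := by
    rw [show ((d.1:ℝ)) = l * a.1 + m * b.1 + n * c.1 from hd1.symm,
        show ((d.2:ℝ)) = l * a.2 + m * b.2 + n * c.2 from hd2.symm,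
        show l = 1 - m - n from by linarith]
    ring
  have hbnot : toR b ∉ convexHull ℝ ({toR d, toR a, toR c} : Set (ℝ × ℝ)) := by
    intro hbmem
    obtain ⟨v1, v2, v3, hv1, hv2, hv3, hvsum, hb1, hb2⟩ := mem_hull3'.mp hbmem
    simp only [toR_fst, toR_snd] at hb1 hb2
    have hFb : (((b.1:ℝ) - a.1) * ((c.2:ℝ) - a.2) - ((b.2:ℝ) - a.2) * ((c.1:ℝ) - a.1))
        = v1 * (((d.1:ℝ) - a.1) * ((c.2:ℝ) - a.2) - ((d.2:ℝ) - a.2) * ((c.1:ℝ) - a.1)) := by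
      rw [show ((b.1:ℝ)) = v1 * d.1 + v2 * a.1 + v3 * c.1 from hb1.symm,
          show ((b.2:ℝ)) = v1 * d.2 + v2 * a.2 + v3 * c.2 from hb2.symm,
          show v2 = 1 - v1 - v3 from by linarith]
      ring
    have key : DR = v1 * (m * DR) := by
      rw [hDRexp]
      linear_combination hFb + v1 * hFd
    have hz : DR * (1 - v1 * m) = 0 := by linear_combination key
    rcases mul_eq_zero.mp hz with h | h
    · exact hDRne h
    · have hv1le : v1 ≤ 1 := by linarith
      nlinarith
  -- the lattice points of hull {d, a, c} are only d, a, c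
  have hempty : ∀ q : ℤ × ℤ,
      toR q ∈ convexHull ℝ ({toR d, toR (d + (a - d)), toR (d + (c - d))} : Set (ℝ × ℝ)) →
      q = d ∨ q = d + (a - d) ∨ q = d + (c - d) := by
    have ea : d + (a - d) = a := by abel
    have ec : d + (c - d) = c := by abel
    rw [ea, ec]
    intro q hq
    have : q ∈ triPts a b c := hsubhull hq
    rw [hT] at this
    simp only [mem_insert_iff, mem_singleton_iff] at this
    rcases this with rfl | rfl | rfl | rfl
    · right; left; rfl
    · exact absurd hq hbnot
    · right; right; rfl
    · left; rfl
  -- det2 (a - d) (c - d) = ± 1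
  have hdacR : ((det2 (a - d) (c - d) : ℤ) : ℝ) = -(m * DR) := by
    show (((a - d).1 * (c - d).2 - (a - d).2 * (c - d).1 : ℤ) : ℝ) = _
    simp only [Prod.fst_sub, Prod.snd_sub]
    push_cast
    rw [hDRexp]
    rw [show ((d.1:ℝ)) = l * a.1 + m * b.1 + n * c.1 from hd1.symm,
        show ((d.2:ℝ)) = l * a.2 + m * b.2 + n * c.2 from hd2.symm,
        show l = 1 - m - n from by linarith]
    ring
  have hdac : det2 (a - d) (c - d) ≠ 0 := by
    intro h
    rw [h] at hdacR
    simp at hdacR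
    rcases hdacR with h' | h'
    · linarith
    · exact hDRne h'
  have h1or := empty_unimodular (p := d) (x := a - d) (y := c - d) hdac hempty
  -- u = a - d is primitive
  have hu : IsCoprime (a - d).1 (a - d).2 := by
    rcases h1or with h | h
    · have h' : (a - d).1 * (c - d).2 - (a - d).2 * (c - d).1 = 1 := h
      exact ⟨(c - d).2, -(c - d).1, by linear_combination h'⟩
    · have h' : (a - d).1 * (c - d).2 - (a - d).2 * (c - d).1 = -1 := h
      exact ⟨-(c - d).2, (c - d).1, by linear_combination -h'⟩
  -- the standard border triangle {d, a, 2a - d, c}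
  have hdw : det2 (a - d) (c - d) = 1 ∨ det2 (a - d) (c - d) = -1 := h1or
  set u : ℤ × ℤ := a - d with hudef
  have hdw' : det2 u (c - d) = 1 ∨ det2 u (c - d) = -1 := hdw
  have hbt := isBorderTri_std (p := d) (u := u) (w := c) hu hdw'
  obtain ⟨hne1, hne2, hne3, hwp, hwpu, hwpuu⟩ := std_distinct (p := d) (u := u) (w := c) hu hdw'
  have hdua : d + u = a := by rw [hudef]; abel
  set T' : Set (ℤ × ℤ) := {d, d + u, d + u + u, c} with hT'
  have hfinT' : T'.Finite := Set.toFinite _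
  have hT'card : T'.ncard = 4 := ncard4 hne1 hne2 (Ne.symm hwp) hne3 (Ne.symm hwpu) (Ne.symm hwpuu)
  have hsub3 : ({d, a, c} : Set (ℤ × ℤ)) ⊆ T' ∩ S := by
    intro x hx
    simp only [mem_insert_iff, mem_singleton_iff] at hx
    rcases hx with rfl | rfl | rfl
    · exact ⟨by simp [hT'], hd_in⟩
    · exact ⟨by rw [← hdua]; simp [hT'], ha_in⟩
    · exact ⟨by simp [hT'], hc_in⟩
  have h3card : ({d, a, c} : Set (ℤ × ℤ)).ncard = 3 := ncard3 hda hdc hac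
  have hle3 : 3 ≤ (T' ∩ S).ncard := by
    rw [← h3card]
    exact Set.ncard_le_ncard hsub3 (hfinT'.inter_of_left S)
  have hle4 : (T' ∩ S).ncard ≤ 4 := by
    rw [← hT'card]
    exact Set.ncard_le_ncard Set.inter_subset_left hfinT'
  have hne3' : (T' ∩ S).ncard ≠ 3 := hB T' hbt
  have h4 : (T' ∩ S).ncard = 4 := by omega
  have heq : T' ∩ S = T' := by
    apply Set.eq_of_subset_of_ncard_le Set.inter_subset_left _ hfinT'
    omega
  have hpuu_in : d + u + u ∈ S := by
    have : d + u + u ∈ T' ∩ S := by rw [heq]; simp [hT']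
    exact this.2
  have hpu_in : d + u ∈ S := by rw [hdua]; exact ha_in
  exact no_triple hB hS hu hd_in hpu_in hpuu_in
lemma dup1_le3 (x y z : ℤ × ℤ) : ({x, y, z, x} : Set (ℤ × ℤ)).ncard ≤ 3 := by
  have he : ({x, y, z, x} : Set (ℤ × ℤ)) = {x, y, z} := by
    ext w; simp only [Set.mem_insert_iff, Set.mem_singleton_iff]; tauto
  rw [he]; exact ncard_le3 x y z

lemma dup2_le3 (x y z : ℤ × ℤ) : ({x, y, z, y} : Set (ℤ × ℤ)).ncard ≤ 3 := by
  have he : ({x, y, z, y} : Set (ℤ × ℤ)) = {x, y, z} := by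
    ext w; simp only [Set.mem_insert_iff, Set.mem_singleton_iff]; tauto
  rw [he]; exact ncard_le3 x y z

lemma dup3_le3 (x y z : ℤ × ℤ) : ({x, y, z, z} : Set (ℤ × ℤ)).ncard ≤ 3 := by
  have he : ({x, y, z, z} : Set (ℤ × ℤ)) = {x, y, z} := by
    ext w; simp only [Set.mem_insert_iff, Set.mem_singleton_iff]; tauto
  rw [he]; exact ncard_le3 x y z

theorem stmt9 (S : Set (ℤ × ℤ)) (hS : S ≠ Set.univ) (h : BIStable S) :
    (∀ T, IsMinimalTri T → (T ∩ S).ncard ≤ 2) ∧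
    (∀ S' : Set (ℤ × ℤ), S' ⊆ S → BIStable S') := by
  obtain ⟨hB, hI⟩ := h
  have part1 : ∀ T, IsMinimalTri T → (T ∩ S).ncard ≤ 2 := by
    intro T hT
    have hne3 : (T ∩ S).ncard ≠ 3 := by
      rcases hT with h' | h'
      · exact hB T h'
      · exact hI T h'
    have hstruct : ∃ a b c d : ℤ × ℤ, det2 (b - a) (c - a) ≠ 0 ∧ T = triPts a b c ∧
        T = {a, b, c, d} ∧ T.ncard = 4 := by
      rcases hT with ⟨a, b, c, d, h1, h2, h3, h4, _⟩ | ⟨a, b, c, d, h1, h2, h3, h4, _⟩ <;>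
        exact ⟨a, b, c, d, h1, h2, h3, h4⟩
    obtain ⟨a, b, c, d, h1, h2, h3, h4⟩ := hstruct
    have hfin : T.Finite := by rw [h3]; exact Set.toFinite _
    have hle4 : (T ∩ S).ncard ≤ 4 := by
      rw [← h4]
      exact Set.ncard_le_ncard Set.inter_subset_left hfin
    have hne4 : (T ∩ S).ncard ≠ 4 := by
      intro h4'
      have heq : T ∩ S = T := by
        apply Set.eq_of_subset_of_ncard_le Set.inter_subset_left _ hfin
        omega
      have hsubS : T ⊆ S := fun x hx => (heq.symm ▸ hx : x ∈ T ∩ S).2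
      rw [h3] at h4
      have hda : d ≠ a := by
        rintro rfl
        have := dup1_le3 d b c
        omega
      have hdb : d ≠ b := by
        rintro rfl
        have := dup2_le3 a d c
        omega
      have hdc : d ≠ c := by
        rintro rfl
        have := dup3_le3 a b d
        omega
      exact no_full hB hS h1 (h2.symm.trans h3) hda hdb hdc (by rw [← h3]; exact hsubS)
    omega
  refine ⟨part1, ?_⟩
  intro S' hS'
  constructor
  · intro T hT
    obtain ⟨a, b, c, d, -, -, h3, -, -⟩ := id hT
    have hfin : T.Finite := by rw [h3]; exact Set.toFinite _
    have hle := part1 T (Or.inl hT)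
    have hmono : (T ∩ S').ncard ≤ (T ∩ S).ncard :=
      Set.ncard_le_ncard (Set.inter_subset_inter Set.Subset.rfl hS') (hfin.inter_of_left S)
    omega
  · intro T hT
    obtain ⟨a, b, c, d, -, -, h3, -, -⟩ := id hT
    have hfin : T.Finite := by rw [h3]; exact Set.toFinite _
    have hle := part1 T (Or.inr hT)
    have hmono : (T ∩ S').ncard ≤ (T ∩ S).ncard :=
      Set.ncard_le_ncard (Set.inter_subset_inter Set.Subset.rfl hS') (hfin.inter_of_left S)
    omega
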